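/- Let σ < 0 < τ be real numbers, a, b ∈ ℝ³, and let X̂ : ℝ → ℝ³ be a bounded measurable map with X̂ = a almost everywhere on (σ,0) and X̂ = b almost everywhere on (0,τ). Set W = X̂ · 1_{ℝ∖(σ,τ)} (i.e., W equals X̂ outside (σ,τ) and 0 on (σ,τ)). Then for every ζ in the upper half plane, the componentwise Poisson integral satisfies P_{X̂}(ζ) = a + b + ((a−b)/π)·Arg(ζ) + (b/π)·Arg(τ−ζ) − (a/π)·Arg⁺(σ−ζ) + P_W(ζ). -/

import Mathlib

set_option maxHeartbeats 1000000

open Real MeasureTheory Set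

lemma arg_im_pos {z : ℂ} (hz : 0 < z.im) :
    Complex.arg z = π/2 - Real.arctan (z.re / z.im) := by
  have hr : (0:ℝ) < ‖z‖ := by
    apply norm_pos_iff.mpr; intro h; rw [h] at hz; simp at hz
  set t := Real.arctan (z.re / z.im) with htdef
  have ht1 : t < π/2 := Real.arctan_lt_pi_div_two _
  have ht2 : -(π/2) < t := Real.neg_pi_div_two_lt_arctan _
  have hθ : π/2 - t ∈ Set.Ioc (-π) π := by
    constructor <;> [linarith [Real.pi_pos]; linarith [Real.pi_pos]]
  have habs : ‖z‖ = Real.sqrt (z.re^2 + z.im^2) := by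
    rw [Complex.norm_def, Complex.normSq_apply]; ring_nf
  have hsq : Real.sqrt (1 + (z.re/z.im)^2) = ‖z‖ / z.im := by
    rw [habs, show 1 + (z.re/z.im)^2 = (z.re^2 + z.im^2)/z.im^2 by field_simp; ring,
      Real.sqrt_div (by positivity), Real.sqrt_sq hz.le]
  have h1 : Real.cos (π/2 - t) = z.re / ‖z‖ := by
    rw [Real.cos_pi_div_two_sub, htdef, Real.sin_arctan, hsq]
    field_simp
  have h2 : Real.sin (π/2 - t) = z.im / ‖z‖ := by
    rw [Real.sin_pi_div_two_sub, htdef, Real.cos_arctan, hsq]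
    field_simp
  have key : (↑‖z‖ : ℂ) * (Complex.cos ((π/2 - t : ℝ)) + Complex.sin ((π/2 - t : ℝ)) * Complex.I) = z := by
    rw [← Complex.ofReal_cos, ← Complex.ofReal_sin]
    apply Complex.ext
    · simp only [Complex.add_re, Complex.mul_re, Complex.ofReal_re, Complex.ofReal_im,
        Complex.mul_im, Complex.I_re, Complex.I_im, Complex.add_im]
      rw [h1, h2]
      field_simp
      ring
    · simp only [Complex.add_re, Complex.mul_re, Complex.ofReal_re, Complex.ofReal_im,
        Complex.mul_im, Complex.I_re, Complex.I_im, Complex.add_im]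
      rw [h1, h2]
      field_simp
      ring
  have h := Complex.arg_mul_cos_add_sin_mul_I hr hθ
  push_cast at h
  push_cast at key
  rw [key] at h
  exact h

lemma arg_im_neg {z : ℂ} (hz : z.im < 0) :
    Complex.arg z = Real.arctan (z.re / (-z.im)) - π/2 := by
  have h1 : (0:ℝ) < ((starRingEnd ℂ) z).im := by simpa using hz
  have h2 := arg_im_pos h1
  rw [Complex.arg_conj] at h2
  rw [if_neg] at h2
  · simp only [Complex.conj_re, Complex.conj_im] at h2
    linarith [h2]
  · intro h
    have := Complex.arg_eq_pi_iff.mp h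
    linarith [this.2, hz]

lemma kernel_integrable (ξ η : ℝ) (hη : 0 < η) :
    Integrable (fun s => η / ((ξ - s)^2 + η^2)) := by
  have h0 : Integrable (fun x : ℝ => (1 + x^2)⁻¹) := integrable_inv_one_add_sq
  have h1 : Integrable (fun x : ℝ => (1 + (x/η)^2)⁻¹) := h0.comp_div hη.ne'
  have h2 : Integrable (fun s : ℝ => (1 + ((s-ξ)/η)^2)⁻¹) := h1.comp_sub_right ξ
  refine (h2.const_mul η⁻¹).congr (Filter.Eventually.of_forall fun s => ?_)
  field_simp
  ring

lemma kernel_intervalIntegral (ξ η c d : ℝ) (hη : 0 < η) :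
    ∫ s in c..d, η / ((ξ - s)^2 + η^2)
      = Real.arctan ((d - ξ)/η) - Real.arctan ((c - ξ)/η) := by
  have hder : ∀ s ∈ Set.uIcc c d,
      HasDerivAt (fun s => Real.arctan ((s - ξ)/η)) (η / ((ξ - s)^2 + η^2)) s := by
    intro s _
    have h1 : HasDerivAt (fun x : ℝ => (x - ξ)/η) (1/η) s := by
      simpa using ((hasDerivAt_id s).sub_const ξ).div_const η
    have h2 := (Real.hasDerivAt_arctan ((s - ξ)/η)).comp s h1
    refine h2.congr_deriv ?_
    field_simp
    ring
  rw [intervalIntegral.integral_eq_sub_of_hasDerivAt hder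
    ((kernel_integrable ξ η hη).intervalIntegrable)]

/-- The Poisson integral for the upper half plane. -/
noncomputable def poisson (U : ℝ → ℝ) (ζ : ℂ) : ℝ :=
  (1 / Real.pi) * ∫ s : ℝ, (ζ.im / ((ζ.re - s) ^ 2 + ζ.im ^ 2)) * U s

/-- `Arg⁺`: the branch of the argument taking values in `(0, 2π)`,
defined on `ℂ \ [0, ∞)`. -/
noncomputable def argPlus (w : ℂ) : ℝ :=
  if 0 < Complex.arg w then Complex.arg w else Complex.arg w + 2 * Real.pi

/-- Decomposition of the Poisson integral of boundary data which is constantly `a`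
on `(σ, 0)` and constantly `b` on `(0, τ)`. -/
theorem poisson_decomposition (σ τ : ℝ) (hσ : σ < 0) (hτ : 0 < τ)
    (a b : Fin 3 → ℝ) (X : ℝ → Fin 3 → ℝ)
    (hXmeas : Measurable X) (hXbdd : ∃ C : ℝ, ∀ s : ℝ, ‖X s‖ ≤ C)
    (hXa : ∀ᵐ s ∂(MeasureTheory.volume.restrict (Set.Ioo σ 0)), X s = a)
    (hXb : ∀ᵐ s ∂(MeasureTheory.volume.restrict (Set.Ioo 0 τ)), X s = b)
    (W : ℝ → Fin 3 → ℝ)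
    (hW : ∀ s : ℝ, W s = if s ∈ Set.Ioo σ τ then 0 else X s) :
    ∀ ζ : ℂ, 0 < ζ.im →
      (fun i => poisson (fun s => X s i) ζ) =
        a + b + (Complex.arg ζ / Real.pi) • (a - b)
          + (Complex.arg ((τ : ℂ) - ζ) / Real.pi) • b
          - (argPlus ((σ : ℂ) - ζ) / Real.pi) • a
          + (fun i => poisson (fun s => W s i) ζ) := by
  intro ζ hζ
  obtain ⟨C, hC⟩ := hXbdd
  set ξ := ζ.re with hξ
  set η := ζ.im with hη
  set k : ℝ → ℝ := fun s => η / ((ξ - s)^2 + η^2) with hk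
  have hkint : Integrable k := kernel_integrable ξ η hζ
  -- arg computations
  have hargζ : Complex.arg ζ = π/2 - Real.arctan (ξ/η) := arg_im_pos hζ
  have hargτ : Complex.arg ((τ : ℂ) - ζ) = Real.arctan ((τ - ξ)/η) - π/2 := by
    have him : ((τ : ℂ) - ζ).im = -η := by simp [hη]
    have := arg_im_neg (z := (τ : ℂ) - ζ) (by rw [him]; linarith)
    rwa [him, neg_neg, show ((τ : ℂ) - ζ).re = τ - ξ by simp [hξ]] at this
  have hargσ : argPlus ((σ : ℂ) - ζ) = Real.arctan ((σ - ξ)/η) - π/2 + 2*π := by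
    have him : ((σ : ℂ) - ζ).im = -η := by simp [hη]
    have harg : Complex.arg ((σ : ℂ) - ζ) = Real.arctan ((σ - ξ)/η) - π/2 := by
      have := arg_im_neg (z := (σ : ℂ) - ζ) (by rw [him]; linarith)
      rwa [him, neg_neg, show ((σ : ℂ) - ζ).re = σ - ξ by simp [hξ]] at this
    rw [argPlus, harg, if_neg]
    push_neg
    linarith [Real.arctan_lt_pi_div_two ((σ - ξ)/η)]
  funext i
  -- pointwise data
  have hXi : Measurable (fun s => X s i) := (measurable_pi_apply i).comp hXmeas
  have hCi : ∀ s, |X s i| ≤ C := fun s => by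
    calc |X s i| = ‖X s i‖ := (Real.norm_eq_abs _).symm
    _ ≤ ‖X s‖ := norm_le_pi_norm (X s) i
    _ ≤ C := hC s
  have hC0 : 0 ≤ C := le_trans (norm_nonneg _) (hC 0)
  set g1 : ℝ → ℝ := (Set.Ioo σ 0).indicator (fun s => X s i) with hg1
  set g2 : ℝ → ℝ := (Set.Ioo 0 τ).indicator (fun s => X s i) with hg2
  have hWi : ∀ s, W s i = if s ∈ Set.Ioo σ τ then 0 else X s i := by
    intro s
    rw [hW s]
    by_cases h : s ∈ Set.Ioo σ τ <;> simp [h]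
  have hmul : ∀ g : ℝ → ℝ, Measurable g → (∀ s, |g s| ≤ C) →
      Integrable (fun s => k s * g s) := by
    intro g hg hb
    have := hkint.bdd_mul (c := C) hg.aestronglyMeasurable (Filter.Eventually.of_forall fun s => by simpa using hb s)
    refine this.congr (Filter.Eventually.of_forall fun s => mul_comm _ _)
  have hint1 : Integrable (fun s => k s * g1 s) :=
    hmul g1 (hXi.indicator measurableSet_Ioo)
      (fun s => by
        rw [hg1]
        by_cases h : s ∈ Set.Ioo σ 0 <;> simp [Set.indicator_apply, h, hCi s, hC0])
  have hint2 : Integrable (fun s => k s * g2 s) :=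
    hmul g2 (hXi.indicator measurableSet_Ioo)
      (fun s => by
        rw [hg2]
        by_cases h : s ∈ Set.Ioo 0 τ <;> simp [Set.indicator_apply, h, hCi s, hC0])
  have hWmeas : Measurable (fun s => W s i) := by
    have : (fun s => W s i) = fun s => if s ∈ Set.Ioo σ τ then 0 else X s i :=
      funext hWi
    rw [this]
    exact Measurable.ite measurableSet_Ioo measurable_const hXi
  have hint3 : Integrable (fun s => k s * W s i) :=
    hmul (fun s => W s i) hWmeas
      (fun s => by
        show |W s i| ≤ C
        rw [hWi s]; by_cases h : s ∈ Set.Ioo σ τ <;> simp [h, hCi s, hC0])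
  -- a.e. splitting of X into the three pieces
  have h0 : ∀ᵐ s : ℝ, s ∉ ({0} : Set ℝ) := by
    rw [← MeasureTheory.measure_eq_zero_iff_ae_notMem]
    exact measure_singleton 0
  have hsplit : ∀ᵐ s : ℝ, k s * X s i = k s * g1 s + k s * g2 s + k s * W s i := by
    filter_upwards [h0] with s hs
    have hs0 : s ≠ 0 := by simpa using hs
    rw [hg1, hg2, hWi s]
    simp only [Set.indicator_apply, Set.mem_Ioo]
    rcases lt_trichotomy s 0 with h | h | h
    · by_cases h1 : σ < s
      · rw [if_pos ⟨h1, h⟩, if_neg (by push_neg; intro h'; linarith),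
          if_pos ⟨h1, by linarith⟩]
        ring
      · push_neg at h1
        rw [if_neg (by push_neg; intro h'; linarith), if_neg (by push_neg; intro h'; linarith),
          if_neg (by push_neg; intro h'; linarith)]
        ring
    · exact absurd h hs0
    · by_cases h2 : s < τ
      · rw [if_neg (by push_neg; intro h'; linarith), if_pos ⟨h, h2⟩,
          if_pos ⟨by linarith, h2⟩]
        ring
      · push_neg at h2
        rw [if_neg (by push_neg; intro h'; linarith), if_neg (by push_neg; intro h'; linarith),
          if_neg (by push_neg; intro h'; linarith)]
        ring
  -- compute the two indicator integrals
  have hXa' : ∀ᵐ s : ℝ, s ∈ Set.Ioo σ 0 → X s = a :=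
    (ae_restrict_iff' measurableSet_Ioo).mp hXa
  have hXb' : ∀ᵐ s : ℝ, s ∈ Set.Ioo 0 τ → X s = b :=
    (ae_restrict_iff' measurableSet_Ioo).mp hXb
  have hI1 : ∫ s : ℝ, k s * g1 s
      = (Real.arctan ((0 - ξ)/η) - Real.arctan ((σ - ξ)/η)) * a i := by
    have e1 : ∀ᵐ s : ℝ, k s * g1 s = (Set.Ioo σ 0).indicator (fun s => k s * a i) s := by
      filter_upwards [hXa'] with s hs
      rw [hg1]
      by_cases h : s ∈ Set.Ioo σ 0
      · simp [Set.indicator_apply, h, hs h]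
      · simp [Set.indicator_apply, h]
    rw [MeasureTheory.integral_congr_ae e1, MeasureTheory.integral_indicator measurableSet_Ioo,
      MeasureTheory.integral_mul_const, ← MeasureTheory.integral_Ioc_eq_integral_Ioo,
      ← intervalIntegral.integral_of_le hσ.le, hk]
    rw [kernel_intervalIntegral ξ η σ 0 hζ]
  have hI2 : ∫ s : ℝ, k s * g2 s
      = (Real.arctan ((τ - ξ)/η) - Real.arctan ((0 - ξ)/η)) * b i := by
    have e2 : ∀ᵐ s : ℝ, k s * g2 s = (Set.Ioo 0 τ).indicator (fun s => k s * b i) s := by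
      filter_upwards [hXb'] with s hs
      rw [hg2]
      by_cases h : s ∈ Set.Ioo 0 τ
      · simp [Set.indicator_apply, h, hs h]
      · simp [Set.indicator_apply, h]
    rw [MeasureTheory.integral_congr_ae e2, MeasureTheory.integral_indicator measurableSet_Ioo,
      MeasureTheory.integral_mul_const, ← MeasureTheory.integral_Ioc_eq_integral_Ioo,
      ← intervalIntegral.integral_of_le hτ.le, hk]
    rw [kernel_intervalIntegral ξ η 0 τ hζ]
  -- put it together
  have hmain : ∫ s : ℝ, k s * X s i
      = (Real.arctan ((0 - ξ)/η) - Real.arctan ((σ - ξ)/η)) * a i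
        + (Real.arctan ((τ - ξ)/η) - Real.arctan ((0 - ξ)/η)) * b i
        + ∫ s : ℝ, k s * W s i := by
    rw [MeasureTheory.integral_congr_ae hsplit,
      MeasureTheory.integral_add (f := fun s => k s * g1 s + k s * g2 s)
        (g := fun s => k s * W s i) (hint1.add hint2) hint3,
      MeasureTheory.integral_add (f := fun s => k s * g1 s)
        (g := fun s => k s * g2 s) hint1 hint2, hI1, hI2]
  simp only [Pi.add_apply, Pi.sub_apply, Pi.smul_apply, smul_eq_mul]
  rw [show poisson (fun s => X s i) ζ = (1/π) * ∫ s : ℝ, k s * X s i from rfl,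
    show poisson (fun s => W s i) ζ = (1/π) * ∫ s : ℝ, k s * W s i from rfl,
    hmain, hargζ, hargτ, hargσ,
    show (0 - ξ)/η = -(ξ/η) by ring, Real.arctan_neg]
  have hπ : (π : ℝ) ≠ 0 := Real.pi_ne_zero
  field_simp
  ring
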